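/- Let f be a polynomial with complex coefficients of degree at least 1, let z₀ ∈ ℂ and b = f(z₀). Then the following are equivalent: (i) there exist an open neighborhood U of b in ℂ and a continuous map s : U → ℂ with s(b) = z₀ and f(s(w)) = w for all w ∈ U; (ii) the derivative of f does not vanish at z₀ (equivalently, z₀ is a simple root of the polynomial f − b). In other words, the stable solutions of the equation f(z) = b are exactly the non-repeated roots of f − b. -/

import Mathlib

set_option maxHeartbeats 1000000

open Polynomial Complex Set Metric Real

/-- The stable solutions of the polynomial equation `f(z) = b` over ℂ are exactly
the non-repeated roots of `f - b`: a continuous local section of `f` through `z₀`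
over a neighborhood of `b` exists iff the derivative of `f` does not vanish at
`z₀`, equivalently iff `z₀` is a simple root of `f - b`. -/
theorem stmt_7 (f : Polynomial ℂ) (hf : 1 ≤ f.natDegree) (z₀ b : ℂ)
    (hb : f.eval z₀ = b) :
    ((∃ (U : Set ℂ), IsOpen U ∧ b ∈ U ∧ ∃ s : ℂ → ℂ, ContinuousOn s U ∧ s b = z₀ ∧
        ∀ w ∈ U, f.eval (s w) = w) ↔ f.derivative.eval z₀ ≠ 0) ∧
    (f.derivative.eval z₀ ≠ 0 ↔ (f - Polynomial.C b).rootMultiplicity z₀ = 1) := by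
  have hg0 : f - C b ≠ 0 := by
    intro h
    rw [sub_eq_zero] at h
    rw [h] at hf
    simp at hf
  have hgroot : (f - C b).IsRoot z₀ := by simp [IsRoot, hb]
  have part2 : f.derivative.eval z₀ ≠ 0 ↔ (f - C b).rootMultiplicity z₀ = 1 := by
    have hmpos : 0 < (f - C b).rootMultiplicity z₀ :=
      (rootMultiplicity_pos hg0).2 hgroot
    constructor
    · intro h
      by_contra hne
      have h2 : 1 < (f - C b).rootMultiplicity z₀ := by omega
      have := ((one_lt_rootMultiplicity_iff_isRoot hg0).1 h2).2
      simp only [derivative_sub, derivative_C, sub_zero, IsRoot] at this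
      exact h this
    · intro h1 hder
      have := (one_lt_rootMultiplicity_iff_isRoot hg0).2
        ⟨hgroot, by simp [IsRoot, hder]⟩
      omega
  refine ⟨⟨?_, ?_⟩, part2⟩
  · -- forward: a continuous section forces a nonzero derivative
    rintro ⟨U, hU, hbU, s, hs, hsb, hsf⟩ hd
    set m := (f - C b).rootMultiplicity z₀ with hm
    have hm2 : 2 ≤ m := by
      have := (one_lt_rootMultiplicity_iff_isRoot hg0).2
        ⟨hgroot, by simp [IsRoot, hd]⟩
      omega
    have hmC : (m : ℂ) ≠ 0 := by
      simp only [ne_eq, Nat.cast_eq_zero]; omega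
    set q := (f - C b) /ₘ (X - C z₀) ^ m with hq
    have hfact : ∀ z : ℂ, f.eval z - b = (z - z₀) ^ m * q.eval z := by
      intro z
      have h0 := congrArg (Polynomial.eval z) ((f - C b).pow_mul_divByMonic_rootMultiplicity_eq z₀)
      simpa using h0.symm
    set c := q.eval z₀ with hc
    have hc0 : c ≠ 0 := eval_divByMonic_pow_rootMultiplicity_ne_zero z₀ hg0
    set d : ℂ := c ^ ((m : ℂ)⁻¹) with hd'
    have hdm : d ^ m = c := Complex.cpow_nat_inv_pow c (by omega)
    set φ : ℂ → ℂ := fun z => d * Complex.exp ((m : ℂ)⁻¹ * Complex.log (q.eval z / c)) with hφ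
    set W : Set ℂ := (fun z => q.eval z / c) ⁻¹' (Metric.ball (1 : ℂ) 1) with hW
    have hqc : Continuous fun z : ℂ => q.eval z / c := q.continuous.div_const c
    have hWopen : IsOpen W := isOpen_ball.preimage hqc
    have hz₀W : z₀ ∈ W := by
      simp [hW, Set.mem_preimage, ← hc, div_self hc0]
    have hWne : ∀ z ∈ W, q.eval z / c ≠ 0 := by
      intro z hz h0
      have : dist (q.eval z / c) (1 : ℂ) < 1 := hz
      rw [h0] at this
      simp [Complex.dist_eq] at this
    have hWslit : ∀ z ∈ W, q.eval z / c ∈ Complex.slitPlane := by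
      intro z hz
      have h1 : dist (q.eval z / c) (1 : ℂ) < 1 := hz
      rw [Complex.dist_eq] at h1
      have h2 : |(q.eval z / c - 1).re| ≤ ‖q.eval z / c - 1‖ :=
        Complex.abs_re_le_norm _
      have h3 : (q.eval z / c - 1).re = (q.eval z / c).re - 1 := by simp
      rw [Complex.mem_slitPlane_iff]
      left
      rw [h3] at h2
      have := abs_le.1 h2
      linarith [this.1]
    have hφcont : ContinuousOn φ W := by
      apply continuousOn_const.mul
      apply Complex.continuous_exp.comp_continuousOn
      apply continuousOn_const.mul
      intro z hz
      exact ContinuousAt.comp_continuousWithinAt (g := Complex.log)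
        (continuousAt_clog (hWslit z hz)) hqc.continuousWithinAt
    have hφpow : ∀ z ∈ W, φ z ^ m = q.eval z := by
      intro z hz
      have h1 : (Complex.exp ((m : ℂ)⁻¹ * Complex.log (q.eval z / c))) ^ m
          = Complex.exp (Complex.log (q.eval z / c)) := by
        rw [← Complex.exp_nat_mul]
        congr 1
        field_simp
      rw [hφ, mul_pow, h1, Complex.exp_log (hWne z hz), hdm]
      field_simp
    set ψ : ℂ → ℂ := fun z => (z - z₀) * φ z with hψ
    have hψcont : ContinuousOn ψ W :=
      (continuous_id.sub continuous_const).continuousOn.mul hφcont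
    have hψpow : ∀ z ∈ W, ψ z ^ m = f.eval z - b := by
      intro z hz
      rw [hψ, mul_pow, hφpow z hz, ← hfact]
    set V : Set ℂ := U ∩ s ⁻¹' W with hV
    have hVopen : IsOpen V := hs.isOpen_inter_preimage hU hWopen
    have hbV : b ∈ V := ⟨hbU, by simp [Set.mem_preimage, hsb, hz₀W]⟩
    obtain ⟨ε, hε, hball⟩ := Metric.isOpen_iff.1 hVopen b hbV
    set r : ℝ := ε / 2 with hr'
    have hr : 0 < r := by positivity
    have hmem : ∀ θ : ℝ, b + r * Complex.exp (θ * Complex.I) ∈ V := by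
      intro θ
      apply hball
      rw [Metric.mem_ball, Complex.dist_eq, add_sub_cancel_left]
      rw [norm_mul, Complex.norm_exp_ofReal_mul_I]
      simp only [mul_one]
      rw [Complex.norm_of_nonneg hr.le]
      simp [hr']; linarith
    set t : ℝ → ℂ := fun θ => ψ (s (b + r * Complex.exp (θ * Complex.I))) with ht
    have htcont : Continuous t := by
      have hγ : Continuous (fun θ : ℝ => b + ↑r * Complex.exp (↑θ * Complex.I)) :=
        continuous_const.add (continuous_const.mul (Complex.continuous_exp.comp
          (Complex.continuous_ofReal.mul continuous_const)))
      have h1 : ContinuousOn (ψ ∘ s) V :=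
        hψcont.comp (hs.mono inter_subset_left) (fun w hw => hw.2)
      exact h1.comp_continuous hγ hmem
    have htpow : ∀ θ : ℝ, t θ ^ m = r * Complex.exp (θ * Complex.I) := by
      intro θ
      rw [ht]
      simp only
      rw [hψpow _ (hmem θ).2, hsf _ (hmem θ).1, add_sub_cancel_left]
    set S : Set ℂ := {z : ℂ | z ^ m = (r : ℂ)} with hS
    have hSfin : S.Finite := by
      have hP : (X ^ m - C (r : ℂ) : ℂ[X]) ≠ 0 := by
        intro h
        have := congrArg natDegree h
        rw [natDegree_X_pow_sub_C] at this
        simp at this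
        omega
      have h1 := Polynomial.finite_setOf_isRoot hP
      convert h1 using 1
      ext z
      simp [hS, IsRoot, sub_eq_zero]
    haveI : Finite ↥S := hSfin.to_subtype
    set u : ℝ → ℂ := fun θ => t θ / Complex.exp ((θ : ℂ) / m * Complex.I) with hu
    have humem : ∀ θ : ℝ, u θ ∈ S := by
      intro θ
      simp only [hS, Set.mem_setOf_eq, hu]
      rw [div_pow, ← Complex.exp_nat_mul, htpow]
      rw [show (m : ℂ) * ((θ : ℂ) / m * Complex.I) = θ * Complex.I by field_simp]
      rw [mul_div_assoc, div_self (Complex.exp_ne_zero _), mul_one]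
    have hucont : Continuous u :=
      htcont.div (Complex.continuous_exp.comp
        ((Complex.continuous_ofReal.div_const _).mul continuous_const))
        (fun θ => Complex.exp_ne_zero _)
    have hconst : u 0 = u (2 * π) :=
      isPreconnected_univ.constant_of_mapsTo hSfin.isDiscrete hucont.continuousOn
        (fun θ _ => humem θ) (Set.mem_univ 0) (Set.mem_univ (2 * π))
    have hexp02 : Complex.exp ((0:ℝ) * Complex.I) = Complex.exp (((2*π:ℝ)) * Complex.I) := by
      push_cast
      rw [zero_mul, Complex.exp_zero]
      exact Complex.exp_two_pi_mul_I.symm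
    have ht02 : t 0 = t (2 * π) := by
      rw [ht]
      simp only [hexp02]
    have ht0 : t 0 ≠ 0 := by
      intro h0
      have := htpow 0
      rw [h0] at this
      simp only [Complex.ofReal_zero, zero_mul, Complex.exp_zero, mul_one] at this
      have : (r : ℂ) = 0 := by
        rw [← this]; simp [zero_pow (show m ≠ 0 by omega)]
      exact hr.ne' (by exact_mod_cast this)
    have hu0 : u 0 = t 0 := by
      simp [hu]
    have hu2 : u (2 * π) = t 0 / Complex.exp ((2 * π : ℂ) / m * Complex.I) := by
      have hcast : ((2 * π : ℝ) : ℂ) = (2 * π : ℂ) := by push_cast; ring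
      simp only [hu]
      rw [← ht02, hcast]
    rw [hu0, hu2] at hconst
    have hexp1 : Complex.exp ((2 * π : ℂ) / m * Complex.I) = 1 := by
      have hne := Complex.exp_ne_zero ((2 * π : ℂ) / m * Complex.I)
      have h2 : t 0 * 1 = t 0 * Complex.exp ((2 * π : ℂ) / m * Complex.I) := by
        rw [mul_one]
        exact (div_eq_iff hne).1 hconst.symm
      exact (mul_left_cancel₀ ht0 h2).symm
    rw [Complex.exp_eq_one_iff] at hexp1
    obtain ⟨n, hn⟩ := hexp1
    have hπ : (π : ℂ) ≠ 0 := by exact_mod_cast Real.pi_ne_zero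
    have hI : Complex.I ≠ 0 := Complex.I_ne_zero
    have h2πI : (2 * π * Complex.I : ℂ) ≠ 0 :=
      mul_ne_zero (mul_ne_zero two_ne_zero hπ) hI
    have hnm : (n : ℂ) * m = 1 := by
      field_simp at hn
      have h2 : ((n : ℂ) * m) * (2 * π * Complex.I) = 1 * (2 * π * Complex.I) := by
        linear_combination (-(2 * π * Complex.I)) * hn
      exact mul_right_cancel₀ h2πI h2
    have hnm' : n * (m : ℤ) = 1 := by exact_mod_cast hnm
    have : (m : ℤ) ≤ 1 := Int.le_of_dvd one_pos ⟨n, by linarith [hnm']⟩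
    omega
  · -- backward: nonzero derivative gives a local section via the inverse function theorem
    intro hd
    have hsd : HasStrictDerivAt (fun x => f.eval x) (f.derivative.eval z₀) z₀ :=
      f.hasStrictDerivAt z₀
    have hF := hsd.hasStrictFDerivAt_equiv hd
    set e := hF.toOpenPartialHomeomorph _ with he
    have hecoe : ∀ x, e x = f.eval x := fun x =>
      congrFun (hF.toOpenPartialHomeomorph_coe) x
    refine ⟨e.target, e.open_target, ?_, e.symm, e.continuousOn_symm, ?_, ?_⟩
    · have := hF.image_mem_toOpenPartialHomeomorph_target
      simpa [hb] using this
    · have h1 := e.left_inv hF.mem_toOpenPartialHomeomorph_source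
      rw [hecoe z₀] at h1
      rw [hb] at h1
      exact h1
    · intro w hw
      have h1 := e.right_inv hw
      rw [hecoe (e.symm w)] at h1
      exact h1
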